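/- For every nonnegative integer n: q^{n²} / (q²;q²)_n · Σ_{k=0}^n ((q^{−n};q)_k (−q^{−n};q)_k / (q;q)_k) (−q)^k = Σ_{k=−n}^n (−1)^k q^{2k²} / ((q;q)_{n−k} (q;q)_{n+k}). -/

import Mathlib

open Finset

noncomputable def qp (x q : ℂ) (n : ℕ) : ℂ := ∏ j ∈ Finset.range n, (1 - x * q ^ j)

noncomputable def qpinf (x q : ℂ) : ℂ := ∏' j : ℕ, (1 - x * q ^ j)

noncomputable def qbinom (q : ℂ) (n k : ℕ) : ℂ := qp q q n / (qp q q k * qp q q (n - k))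

noncomputable def RS (a b q : ℂ) (n : ℕ) : ℂ :=
  ∑ k ∈ Finset.range (n + 1), qbinom q n k * a ^ k * b ^ (n - k)

noncomputable def Tsum (q : ℂ) (r n s : ℕ) : ℂ :=
  ∑ k ∈ Finset.range (n + 1),
    qp (q ^ (-(2 * (n : ℤ)))) (q ^ 2) k / (qp q q k * qp (q ^ ((1 : ℤ) + r - n)) q k)
      * q ^ ((2 - (s : ℤ)) * k)

noncomputable def gam (q : ℂ) (n : ℕ) : ℂ :=
  ∑ k ∈ Finset.range (n + 1), qbinom q n k * q ^ (k ^ 2) / qp (-q) q k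


lemma qp_zero (x q : ℂ) : qp x q 0 = 1 := rfl
lemma qp_succ (x q : ℂ) (n : ℕ) : qp x q (n+1) = qp x q n * (1 - x * q ^ n) :=
  Finset.prod_range_succ _ _
lemma one_sub_pow_ne (q : ℂ) (hq : ‖q‖ < 1) {j : ℕ} (hj : j ≠ 0) :
    (1 : ℂ) - q ^ j ≠ 0 := by
  intro h
  have h1 : q ^ j = 1 := by linear_combination -h
  have : ‖q ^ j‖ < 1 := by
    rw [norm_pow]
    calc ‖q‖ ^ j ≤ ‖q‖ ^ 1 :=
      pow_le_pow_of_le_one (norm_nonneg q) hq.le (Nat.one_le_iff_ne_zero.mpr hj)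
    _ < 1 := by simpa using hq
  rw [h1] at this; simp at this
lemma fac_ne (q : ℂ) (hq : ‖q‖ < 1) (j : ℕ) : (1:ℂ) - q * q ^ j ≠ 0 := by
  have := one_sub_pow_ne q hq (Nat.succ_ne_zero j)
  rw [pow_succ'] at this; exact this
lemma P_ne (q : ℂ) (hq : ‖q‖ < 1) (k : ℕ) : qp q q k ≠ 0 := by
  unfold qp
  apply Finset.prod_ne_zero_iff.mpr
  intro j _
  exact fac_ne q hq j

lemma div4 {A B C D E F G H : ℂ} (hB : B ≠ 0) (hD : D ≠ 0) (hF : F ≠ 0) (hH : H ≠ 0)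
    (h : A*D*F*H - C*B*F*H = E*B*D*H - G*B*D*F) : A/B - C/D = E/F - G/H := by
  rw [div_sub_div _ _ hB hD, div_sub_div _ _ hF hH,
    div_eq_div_iff (mul_ne_zero hB hD) (mul_ne_zero hF hH)]
  linear_combination h

noncomputable def gD (q : ℂ) (d a i : ℕ) : ℂ :=
  if i ≤ a+1 then q^(i*(i+d)) * (q^(a+1) + q^(a+1+d) - q^(a+1-i) - q^(a+1+d+i)) /
    (qp q q i * qp q q (i+d) * qp q q (a+1-i)) else 0

lemma durfee (q : ℂ) (hq : ‖q‖ < 1) (d : ℕ) : ∀ a : ℕ,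
    ∑ i ∈ range (a+1), q^(i*(i+d)) / (qp q q (a-i) * qp q q i * qp q q (i+d))
      = 1 / (qp q q a * qp q q (a+d)) := by
  intro a
  induction a with
  | zero => simp [qp_zero]
  | succ a IH =>
    have key : ∀ i ∈ range (a+2),
        q^(i*(i+d)) / (qp q q (a+1-i) * qp q q i * qp q q (i+d)) *
          ((1 - q^(a+1)) * (1 - q^(a+1+d)))
        - (if i ≤ a then q^(i*(i+d)) / (qp q q (a-i) * qp q q i * qp q q (i+d)) else 0)
        = gD q d a (i+1) - gD q d a i := by
      intro i hi
      rw [Finset.mem_range] at hi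
      by_cases hia : i ≤ a
      · obtain ⟨b, rfl⟩ : ∃ b, a = i + b := ⟨a-i, by omega⟩
        rw [if_pos hia]
        unfold gD
        rw [if_pos (by omega), if_pos (by omega)]
        have e1 : i+b+1-i = b+1 := by omega
        have e2 : i+b-i = b := by omega
        have e3 : i+b+1-(i+1) = b := by omega
        rw [e1, e2, e3]
        have e4 : i+1+d = (i+d)+1 := by omega
        rw [e4, qp_succ q q b, qp_succ q q i, qp_succ q q (i+d)]
        have h1 := P_ne q hq i
        have h2 := P_ne q hq (i+d)
        have h3 := P_ne q hq b
        have h4 := fac_ne q hq i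
        have h5 := fac_ne q hq b
        have h6 := fac_ne q hq (i+d)
        rw [div_mul_eq_mul_div]
        apply div4
        · exact mul_ne_zero (mul_ne_zero (mul_ne_zero h3 h5) h1) h2
        · exact mul_ne_zero (mul_ne_zero h3 h1) h2
        · exact mul_ne_zero (mul_ne_zero (mul_ne_zero h1 h4) (mul_ne_zero h2 h6)) h3
        · exact mul_ne_zero (mul_ne_zero h1 h2) (mul_ne_zero h3 h5)
        · ring
      · have hieq : i = a+1 := by omega
        subst hieq
        rw [if_neg (by omega)]
        unfold gD
        rw [if_neg (by omega), if_pos (by omega)]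
        have e1 : a+1-(a+1) = 0 := by omega
        rw [e1, qp_zero]
        have h1 := P_ne q hq (a+1)
        have h2 := P_ne q hq (a+1+d)
        rw [div_mul_eq_mul_div]
        have z : (0:ℂ) = 0/1 := by norm_num
        calc q ^ ((a+1) * (a+1+d)) * ((1 - q ^ (a + 1)) * (1 - q ^ (a + 1 + d))) /
              (1 * qp q q (a + 1) * qp q q (a + 1 + d)) - 0
            = q ^ ((a+1) * (a+1+d)) * ((1 - q ^ (a + 1)) * (1 - q ^ (a + 1 + d))) /
              (1 * qp q q (a + 1) * qp q q (a + 1 + d)) - 0/1 := by norm_num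
          _ = 0/1 - q ^ ((a + 1) * (a + 1 + d)) *
                (q ^ (a + 1) + q ^ (a + 1 + d) - q ^ 0 - q ^ (a + 1 + d + (a + 1))) /
                (qp q q (a + 1) * qp q q (a + 1 + d) * 1) := by
              apply div4 (by simpa using mul_ne_zero h1 h2) one_ne_zero one_ne_zero
                (by simpa using mul_ne_zero h1 h2)
              ring
          _ = 0 - q ^ ((a + 1) * (a + 1 + d)) *
                (q ^ (a + 1) + q ^ (a + 1 + d) - q ^ 0 - q ^ (a + 1 + d + (a + 1))) /
                (qp q q (a + 1) * qp q q (a + 1 + d) * 1) := by norm_num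
    have tele : ∑ i ∈ range (a+2), (gD q d a (i+1) - gD q d a i) = 0 := by
      rw [Finset.sum_range_sub (gD q d a) (a+2)]
      have g2 : gD q d a (a+2) = 0 := if_neg (by omega)
      have g0 : gD q d a 0 = 0 := by
        unfold gD
        rw [if_pos (by omega)]
        have hnum : q^(a+1) + q^(a+1+d) - q^(a+1-0) - q^(a+1+d+0) = (0:ℂ) := by
          rw [Nat.sub_zero, Nat.add_zero]; ring
        rw [hnum, mul_zero, zero_div]
      rw [g0, g2, sub_zero]
    have sumeq := Finset.sum_congr rfl key
    rw [tele, Finset.sum_sub_distrib, ← Finset.sum_mul] at sumeq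
    have hsum2 : ∑ i ∈ range (a+2),
        (if i ≤ a then q^(i*(i+d)) / (qp q q (a-i) * qp q q i * qp q q (i+d)) else 0)
        = 1 / (qp q q a * qp q q (a+d)) := by
      rw [Finset.sum_range_succ, if_neg (by omega), add_zero, ← IH]
      exact Finset.sum_congr rfl fun i hi => if_pos (by rw [Finset.mem_range] at hi; omega)
    rw [hsum2] at sumeq
    rw [sub_eq_zero] at sumeq
    have h1 := P_ne q hq a
    have h2 := P_ne q hq (a+d)
    have hc1 : (1:ℂ) - q^(a+1) ≠ 0 := one_sub_pow_ne q hq (by omega)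
    have hc2 : (1:ℂ) - q^(a+1+d) ≠ 0 := one_sub_pow_ne q hq (by omega)
    have e5 : a+1+d = (a+d)+1 := by omega
    rw [e5] at hc2
    have hc : (1:ℂ) - q^(a+1) ≠ 0 := hc1
    -- From sumeq : S * c = 1/(Pa*Pad), conclude S = 1/(P(a+1)*P(a+d+1))
    rw [e5, qp_succ q q a, qp_succ q q (a+d)]
    have hne : ((1:ℂ) - q^(a+1)) * (1 - q^(a+d+1)) ≠ 0 := mul_ne_zero hc1 hc2
    have : (∑ i ∈ range (a+2), q^(i*(i+d)) / (qp q q (a+1-i) * qp q q i * qp q q (i+d)))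
        = (1 / (qp q q a * qp q q (a+d))) / ((1 - q^(a+1)) * (1 - q^(a+d+1))) := by
      rw [eq_div_iff hne, ← e5]; exact sumeq
    rw [this, div_div]
    congr 1
    ring

lemma hx_lemma (q : ℂ) (hq0 : q ≠ 0) (n : ℕ) : (q ^ (-(n:ℤ)))^2 * q^(2*n) = 1 := by
  have : (q ^ (-(n:ℤ)))^2 = q ^ (-(2*n:ℤ)) := by
    rw [← zpow_natCast (q ^ (-(n:ℤ))) 2, ← zpow_mul]
    norm_num; ring_nf
  rw [this, ← zpow_natCast q (2*n), ← zpow_add₀ hq0]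
  norm_num

lemma lemE (q : ℂ) (hq0 : q ≠ 0) (n : ℕ) : ∀ k, k ≤ n →
    q^(2*n*k) * qp ((q ^ (-(n:ℤ)))^2) (q^2) k * ((-q)^k * q^(n^2)) * qp (q^2) (q^2) (n-k)
      = q^((n-k)^2 + 2*n*k) * qp (q^2) (q^2) n := by
  intro k
  induction k with
  | zero => intro _; simp [qp]
  | succ k IH =>
    intro hk
    obtain ⟨b, rfl⟩ : ∃ b, n = k+1+b := ⟨n-(k+1), by omega⟩
    have IH' := IH (by omega)
    have hs1 : k+1+b-k = b+1 := by omega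
    have hs2 : k+1+b-(k+1) = b := by omega
    rw [hs1, qp_succ] at IH'
    rw [hs2, qp_succ]
    have hx := hx_lemma q hq0 (k+1+b)
    linear_combination (q^(2*k+1)) * IH' +
      ((-1:ℂ)^k * q^(2 + 7*k + 4*k*b + 3*k^2 + 2*b + b^2) *
        qp ((q ^ (-((k+1+b:ℕ):ℤ)))^2) (q^2) k * qp (q^2) (q^2) b) * hx

noncomputable def gG (q : ℂ) (m i : ℕ) : ℂ :=
  if i ≤ 2*m+2 then (-1:ℂ)^(i+m+1) * q^((m+1)^2) * (q^(2*m+2) - q^(2*m+2-i)) /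
    (q^(i*(2*m+2-i)) * qp q q (2*m+2-i) * qp q q i) else 0

lemma gauss (q : ℂ) (hq0 : q ≠ 0) (hq : ‖q‖ < 1) : ∀ m : ℕ,
    ∑ i ∈ range (2*m+1), (-1:ℂ)^(i+m) * q^(m^2) / (q^(i*(2*m-i)) * qp q q (2*m-i) * qp q q i)
      = 1 / qp (q^2) (q^2) m := by
  intro m
  induction m with
  | zero => norm_num [qp_zero]
  | succ m IH =>
    have hqp0 : ∀ e : ℕ, (q:ℂ)^e ≠ 0 := fun e => pow_ne_zero e hq0
    have key : ∀ i ∈ range (2*(m+1)+1),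
        (-1:ℂ)^(i+(m+1)) * q^((m+1)^2) /
            (q^(i*(2*(m+1)-i)) * qp q q (2*(m+1)-i) * qp q q i) * (1 - q^(2*m+2))
        - (if 1 ≤ i ∧ i ≤ 2*m+1 then
            (-1:ℂ)^(i-1+m) * q^(m^2) / (q^((i-1)*(2*m-(i-1))) * qp q q (2*m-(i-1)) * qp q q (i-1))
          else 0)
        = gG q m (i+1) - gG q m i := by
      intro i hi
      rw [Finset.mem_range] at hi
      rcases Nat.eq_zero_or_pos i with h0 | hpos
      · subst h0
        rw [if_neg (by omega)]
        have hg0 : gG q m 0 = 0 := by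
          unfold gG; rw [if_pos (by omega)]; simp
        rw [hg0, sub_zero, sub_zero]
        unfold gG
        rw [if_pos (by omega)]
        have e1 : 2*(m+1)-0 = (2*m+1)+1 := by omega
        have e2 : 2*m+2-1 = (2*m)+1 := by omega
        rw [e1, e2, qp_succ q q (2*m+1), qp_zero,
          show qp q q 1 = qp q q 0 * (1 - q * q^0) from qp_succ q q 0, qp_zero]
        have h1 := P_ne q hq (2*m+1)
        have h2 := P_ne q hq (2*m)
        have h4 := fac_ne q hq (2*m+1)
        have h5 := fac_ne q hq 0
        have h6 := fac_ne q hq (2*m)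
        have hP1 : qp q q ((2*m)+1) = qp q q (2*m) * (1 - q*q^(2*m)) := qp_succ q q (2*m)
        rw [hP1]
        rw [div_mul_eq_mul_div, div_eq_div_iff
          (mul_ne_zero (mul_ne_zero (hqp0 _) (mul_ne_zero (mul_ne_zero h2 h6) h4)) one_ne_zero)
          (mul_ne_zero (mul_ne_zero (hqp0 _) (mul_ne_zero h2 h6)) (mul_ne_zero one_ne_zero h5))]
        ring
      · rcases Nat.lt_or_ge i (2*m+2) with hlt | hge
        · -- middle case : 1 ≤ i ≤ 2m+1
          obtain ⟨i', rfl⟩ : ∃ i', i = i'+1 := ⟨i-1, by omega⟩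
          obtain ⟨b, hb⟩ : ∃ b, 2*m = i'+b := ⟨2*m-i', by omega⟩
          rw [if_pos (⟨by omega, by omega⟩ : 1 ≤ i'+1 ∧ i'+1 ≤ 2*m+1)]
          unfold gG
          rw [if_pos (show i'+1+1 ≤ 2*m+2 by omega), if_pos (show i'+1 ≤ 2*m+2 by omega)]
          simp only [Nat.add_sub_cancel]
          have e1 : 2*(m+1)-(i'+1) = b+1 := by omega
          have e2 : 2*m-i' = b := by omega
          have e3 : 2*m+2-(i'+1+1) = b := by omega
          have e4 : 2*m+2-(i'+1) = b+1 := by omega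
          rw [e1, e2, e3, e4]
          have em : (m+1)^2 = m^2 + (i'+b+1) := by rw [← hb]; ring
          have e5 : 2*m+2 = i'+b+2 := by omega
          rw [em, e5, pow_add]
          rw [qp_succ q q (i'+1), qp_succ q q b, qp_succ q q i']
          have h1 := P_ne q hq i'
          have h3 := P_ne q hq b
          have h4 := fac_ne q hq i'
          have h5 := fac_ne q hq b
          have h7 := fac_ne q hq (i'+1)
          rw [div_mul_eq_mul_div]
          refine div4 ?_ ?_ ?_ ?_ ?_
          · apply_rules [mul_ne_zero, hqp0]
          · apply_rules [mul_ne_zero, hqp0]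
          · apply_rules [mul_ne_zero, hqp0]
          · apply_rules [mul_ne_zero, hqp0]
          · ring
        · -- i = 2m+2
          have hieq : i = 2*m+2 := by omega
          subst hieq
          rw [if_neg (by omega)]
          have hg3 : gG q m (2*m+2+1) = 0 := by
            unfold gG; rw [if_neg (by omega)]
          rw [hg3, sub_zero, zero_sub]
          unfold gG
          rw [if_pos (by omega)]
          have e1 : 2*(m+1)-(2*m+2) = 0 := by omega
          have e2 : 2*m+2-(2*m+2) = 0 := by omega
          rw [e1, e2, qp_zero]
          have h1 := P_ne q hq (2*m+2)
          rw [div_mul_eq_mul_div, ← neg_div]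
          have hD : (q:ℂ) ^ ((2*m+2)*0) * 1 * qp q q (2*m+2) ≠ 0 := by
            apply_rules [mul_ne_zero, hqp0, one_ne_zero]
          rw [div_eq_div_iff hD hD]
          ring
    have tele : ∑ i ∈ range (2*(m+1)+1), (gG q m (i+1) - gG q m i) = 0 := by
      rw [Finset.sum_range_sub (gG q m) (2*(m+1)+1)]
      have g2 : gG q m (2*(m+1)+1) = 0 := by unfold gG; rw [if_neg (by omega)]
      have g0 : gG q m 0 = 0 := by unfold gG; rw [if_pos (by omega)]; simp
      rw [g0, g2, sub_zero]
    have sumeq := Finset.sum_congr rfl key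
    rw [tele, Finset.sum_sub_distrib, ← Finset.sum_mul] at sumeq
    have hsum2 : ∑ i ∈ range (2*(m+1)+1),
        (if 1 ≤ i ∧ i ≤ 2*m+1 then
          (-1:ℂ)^(i-1+m) * q^(m^2) / (q^((i-1)*(2*m-(i-1))) * qp q q (2*m-(i-1)) * qp q q (i-1))
        else 0)
        = 1 / qp (q^2) (q^2) m := by
      have hr : 2*(m+1)+1 = (2*m+2)+1 := by omega
      rw [hr, Finset.sum_range_succ', if_neg (by omega), add_zero,
        Finset.sum_range_succ, if_neg (by omega), add_zero, ← IH]
      apply Finset.sum_congr rfl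
      intro i hi
      rw [Finset.mem_range] at hi
      rw [if_pos (⟨by omega, by omega⟩ : 1 ≤ i+1 ∧ i+1 ≤ 2*m+1)]
      simp only [Nat.add_sub_cancel]
    rw [hsum2, sub_eq_zero] at sumeq
    have hQm := P_ne (q^2) (by rw [norm_pow]; exact pow_lt_one₀ (norm_nonneg q) hq (by norm_num)) m
    have hc : (1:ℂ) - q^(2*m+2) ≠ 0 := one_sub_pow_ne q hq (by omega)
    have : (∑ i ∈ range (2*(m+1)+1), (-1:ℂ)^(i+(m+1)) * q^((m+1)^2) /
          (q^(i*(2*(m+1)-i)) * qp q q (2*(m+1)-i) * qp q q i))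
        = (1 / qp (q^2) (q^2) m) / (1 - q^(2*m+2)) := by
      rw [eq_div_iff hc]; exact sumeq
    rw [this, div_div, qp_succ (q^2) (q^2) m]
    congr 1
    ring

lemma Q_ne (q : ℂ) (hq : ‖q‖ < 1) (k : ℕ) : qp (q^2) (q^2) k ≠ 0 :=
  P_ne (q^2) (by rw [norm_pow]; exact pow_lt_one₀ (norm_nonneg q) hq (by norm_num)) k

noncomputable def FF (q : ℂ) (n u m : ℕ) : ℂ :=
  if n ≤ m+u ∧ u ≤ n+m then
    (-1:ℂ)^(u+n) * q^(2*m^2) /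
      (q^((m+u-n)*(m+n-u)) * qp q q (m+n-u) * qp q q (m+u-n) * qp q q (n-m))
  else 0

lemma neg_one_shift (c e : ℕ) : (-1:ℂ)^(e+2*c) = (-1:ℂ)^e := by
  rw [pow_add, pow_mul]; norm_num

lemma stepA (q : ℂ) (n m : ℕ) (hmn : m ≤ n) :
    ∑ u ∈ range (2*n+1), FF q n u m
      = ∑ i ∈ range (2*m+1),
          (-1:ℂ)^(i+m) * q^(2*m^2) / (q^(i*(2*m-i)) * qp q q (2*m-i) * qp q q i * qp q q (n-m)) := by
  obtain ⟨c, rfl⟩ : ∃ c, n = m + c := ⟨n - m, by omega⟩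
  have hemb : Function.Injective (fun i : ℕ => i + c) := fun a b h => by simpa using h
  have hsub : (range (2*m+1)).map ⟨fun i => i + c, hemb⟩ ⊆ range (2*(m+c)+1) := by
    intro u hu
    rw [Finset.mem_map] at hu
    obtain ⟨b, hb, rfl⟩ := hu
    rw [Finset.mem_range] at hb
    rw [Finset.mem_range]
    show b + c < 2*(m+c)+1
    omega
  have hzero : ∀ u ∈ range (2*(m+c)+1), u ∉ (range (2*m+1)).map ⟨fun i => i + c, hemb⟩ →
      FF q (m+c) u m = 0 := by
    intro u hu hnm
    rw [Finset.mem_range] at hu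
    unfold FF
    rw [if_neg]
    rintro ⟨h1, h2⟩
    refine hnm ?_
    rw [Finset.mem_map]
    refine ⟨u - c, ?_, ?_⟩
    · rw [Finset.mem_range]; omega
    · show u - c + c = u; omega
  rw [← Finset.sum_subset hsub hzero, Finset.sum_map]
  apply Finset.sum_congr rfl
  intro i hi
  rw [Finset.mem_range] at hi
  simp only [Function.Embedding.coeFn_mk]
  unfold FF
  rw [if_pos ⟨by omega, by omega⟩]
  have s1 : m+(i+c)-(m+c) = i := by omega
  have s2 : m+(m+c)-(i+c) = 2*m-i := by omega
  rw [s1, s2]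
  rw [show i+c+(m+c) = (i+m)+2*c from by omega, neg_one_shift]

lemma div4' {A B C D : ℂ} (hB : B ≠ 0) (hD : D ≠ 0) (h : A * D = C * B) : A/B = C/D := by
  rw [div_eq_div_iff hB hD]; exact h


lemma stepC (q : ℂ) (hq0 : q ≠ 0) (hq : ‖q‖ < 1) (n u : ℕ) (hu : u < 2*n+1) :
    ∑ m ∈ range (n+1), FF q n u m
      = (-1:ℂ)^(u+n) * q^(2*((u-n)+(n-u))^2) / (qp q q (2*n-u) * qp q q u) := by
  rcases le_or_gt n u with hun | hun
  · obtain ⟨j, rfl⟩ : ∃ j, u = n + j := ⟨u - n, by omega⟩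
    have hjn : j ≤ n := by omega
    have hemb : Function.Injective (fun m : ℕ => m + j) := fun a b h => by simpa using h
    have hsub : (range (n-j+1)).map ⟨fun m => m + j, hemb⟩ ⊆ range (n+1) := by
      intro m hm
      rw [Finset.mem_map] at hm
      obtain ⟨b, hb, rfl⟩ := hm
      rw [Finset.mem_range] at hb
      rw [Finset.mem_range]
      show b + j < _
      omega
    have hzero : ∀ m ∈ range (n+1), m ∉ (range (n-j+1)).map ⟨fun m => m + j, hemb⟩ →
        FF q n (n+j) m = 0 := by
      intro m hm hnm
      rw [Finset.mem_range] at hm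
      unfold FF
      rw [if_neg]
      rintro ⟨h1, h2⟩
      refine hnm ?_
      rw [Finset.mem_map]
      refine ⟨m - j, ?_, ?_⟩
      · rw [Finset.mem_range]; omega
      · show m - j + j = m; omega
    rw [← Finset.sum_subset hsub hzero, Finset.sum_map]
    have hterm : ∀ i ∈ range (n-j+1), FF q n (n+j) (i + j)
        = ((-1:ℂ)^(n+j+n) * q^(2*j^2)) *
          (q^(i*(i+2*j)) / (qp q q (n-j-i) * qp q q i * qp q q (i+2*j))) := by
      intro i hi
      rw [Finset.mem_range] at hi
      unfold FF
      rw [if_pos ⟨by omega, by omega⟩]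
      have s1 : i+j+(n+j)-n = i+2*j := by omega
      have s2 : i+j+n-(n+j) = i := by omega
      have s3 : n-(i+j) = n-j-i := by omega
      rw [s1, s2, s3]
      rw [← mul_div_assoc]
      apply div4'
      · apply_rules [mul_ne_zero, pow_ne_zero, P_ne q hq, hq0]
      · apply_rules [mul_ne_zero, P_ne q hq]
      · ring
    rw [show (∑ x ∈ range (n-j+1), FF q n (n+j)
          ((⟨fun m => m + j, hemb⟩ : ℕ ↪ ℕ) x)) = ∑ x ∈ range (n-j+1), FF q n (n+j) (x + j)
        from rfl,
      Finset.sum_congr rfl hterm, ← Finset.mul_sum, durfee q hq (2*j) (n-j)]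
    have t1 : n+j-n = j := by omega
    have t2 : n-(n+j) = 0 := by omega
    have t3 : 2*n-(n+j) = n-j := by omega
    have t4 : n-j+2*j = n+j := by omega
    rw [t1, t2, t3, t4]
    ring
  · obtain ⟨j, rfl⟩ : ∃ j, n = u + j := ⟨n - u, by omega⟩
    have hemb : Function.Injective (fun m : ℕ => m + j) := fun a b h => by simpa using h
    have hsub : (range (u+1)).map ⟨fun m => m + j, hemb⟩ ⊆ range (u+j+1) := by
      intro m hm
      rw [Finset.mem_map] at hm
      obtain ⟨b, hb, rfl⟩ := hm
      rw [Finset.mem_range] at hb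
      rw [Finset.mem_range]
      show b + j < _
      omega
    have hzero : ∀ m ∈ range (u+j+1), m ∉ (range (u+1)).map ⟨fun m => m + j, hemb⟩ →
        FF q (u+j) u m = 0 := by
      intro m hm hnm
      rw [Finset.mem_range] at hm
      unfold FF
      rw [if_neg]
      rintro ⟨h1, h2⟩
      refine hnm ?_
      rw [Finset.mem_map]
      refine ⟨m - j, ?_, ?_⟩
      · rw [Finset.mem_range]; omega
      · show m - j + j = m; omega
    rw [← Finset.sum_subset hsub hzero, Finset.sum_map]
    have hterm : ∀ i ∈ range (u+1), FF q (u+j) u (i + j)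
        = ((-1:ℂ)^(u+(u+j)) * q^(2*j^2)) *
          (q^(i*(i+2*j)) / (qp q q (u-i) * qp q q i * qp q q (i+2*j))) := by
      intro i hi
      rw [Finset.mem_range] at hi
      unfold FF
      rw [if_pos ⟨by omega, by omega⟩]
      have s1 : i+j+u-(u+j) = i := by omega
      have s2 : i+j+(u+j)-u = i+2*j := by omega
      have s3 : u+j-(i+j) = u-i := by omega
      rw [s1, s2, s3]
      rw [← mul_div_assoc]
      apply div4'
      · apply_rules [mul_ne_zero, pow_ne_zero, P_ne q hq, hq0]
      · apply_rules [mul_ne_zero, P_ne q hq]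
      · ring
    rw [show (∑ x ∈ range (u+1), FF q (u+j) u
          ((⟨fun m => m + j, hemb⟩ : ℕ ↪ ℕ) x)) = ∑ x ∈ range (u+1), FF q (u+j) u (x + j)
        from rfl,
      Finset.sum_congr rfl hterm, ← Finset.mul_sum, durfee q hq (2*j) u]
    have t1 : u-(u+j) = 0 := by omega
    have t2 : u+j-u = j := by omega
    have t3 : 2*(u+j)-u = u+2*j := by omega
    rw [t1, t2, t3]
    ring

lemma qp_mul_neg (x q : ℂ) (k : ℕ) :
    qp x q k * qp (-x) q k = qp (x^2) (q^2) k := by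
  unfold qp
  rw [← Finset.prod_mul_distrib]
  apply Finset.prod_congr rfl
  intro j _
  have h : (q^2)^j = (q^j)^2 := by ring
  rw [h]; ring

lemma zsign (u n : ℕ) : ((-1:ℂ))^((u:ℤ)-(n:ℤ)) = (-1:ℂ)^(u+n) := by
  have h2 : (-1:ℂ)^n * (-1)^n = 1 := by
    rw [← pow_add, show n+n = 2*n from by ring, pow_mul]; norm_num
  rw [zpow_sub₀ (by norm_num : (-1:ℂ) ≠ 0), zpow_natCast, zpow_natCast, div_eq_mul_inv,
    inv_eq_of_mul_eq_one_right h2, ← pow_add]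

theorem stmt17 (q : ℂ) (hq0 : q ≠ 0) (hq : ‖q‖ < 1) (n : ℕ) :
    q ^ (n ^ 2) / qp (q ^ 2) (q ^ 2) n *
        ∑ k ∈ Finset.range (n + 1),
          qp (q ^ (-(n : ℤ))) q k * qp (-(q ^ (-(n : ℤ)))) q k / qp q q k * (-q) ^ k
      = ∑ k ∈ Finset.Icc (-(n : ℤ)) (n : ℤ),
          (-1 : ℂ) ^ k * q ^ (2 * k ^ 2)
            / (qp q q ((n : ℤ) - k).toNat * qp q q ((n : ℤ) + k).toNat) := by
  rw [Finset.mul_sum]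
  have step1 : ∀ k ∈ Finset.range (n+1),
      q ^ (n ^ 2) / qp (q ^ 2) (q ^ 2) n *
        (qp (q ^ (-(n : ℤ))) q k * qp (-(q ^ (-(n : ℤ)))) q k / qp q q k * (-q) ^ k)
      = q^((n-k)^2) / (qp (q^2) (q^2) (n-k) * qp q q k) := by
    intro k hk
    rw [Finset.mem_range] at hk
    rw [qp_mul_neg]
    have hE := lemE q hq0 n k (by omega)
    rw [pow_add] at hE
    have hcan : qp ((q^(-(n:ℤ)))^2) (q^2) k * ((-q)^k*q^(n^2)) * qp (q^2) (q^2) (n-k)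
        = q^((n-k)^2) * qp (q^2) (q^2) n := by
      have h2 : q^(2*n*k) * (qp ((q^(-(n:ℤ)))^2) (q^2) k * ((-q)^k*q^(n^2)) * qp (q^2) (q^2) (n-k))
          = q^(2*n*k) * (q^((n-k)^2) * qp (q^2) (q^2) n) := by linear_combination hE
      exact mul_left_cancel₀ (pow_ne_zero _ hq0) h2
    have lhs_rw : q ^ (n ^ 2) / qp (q ^ 2) (q ^ 2) n *
          (qp ((q ^ (-(n : ℤ)))^2) (q^2) k / qp q q k * (-q) ^ k)
        = (q ^ (n ^ 2) * qp ((q ^ (-(n : ℤ)))^2) (q^2) k * (-q) ^ k) /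
          (qp (q ^ 2) (q ^ 2) n * qp q q k) := by
      ring
    rw [lhs_rw, div_eq_div_iff
      (mul_ne_zero (Q_ne q hq n) (P_ne q hq k))
      (mul_ne_zero (Q_ne q hq (n-k)) (P_ne q hq k))]
    linear_combination (qp q q k) * hcan
  rw [Finset.sum_congr rfl step1]
  have step2 : ∑ k ∈ Finset.range (n+1), q^((n-k)^2) / (qp (q^2) (q^2) (n-k) * qp q q k)
      = ∑ m ∈ Finset.range (n+1), q^(m^2) / (qp (q^2) (q^2) m * qp q q (n-m)) := by
    have hrefl := Finset.sum_range_reflect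
      (fun j => q^(j^2)/(qp (q^2) (q^2) j * qp q q (n-j))) (n+1)
    rw [← hrefl]
    apply Finset.sum_congr rfl
    intro k hk
    rw [Finset.mem_range] at hk
    have e1 : n+1-1-k = n-k := by omega
    have e2 : n-(n-k) = k := by omega
    rw [e1, e2]
  rw [step2]
  have step3 : ∀ m ∈ Finset.range (n+1),
      q^(m^2) / (qp (q^2) (q^2) m * qp q q (n-m)) = ∑ u ∈ Finset.range (2*n+1), FF q n u m := by
    intro m hm
    rw [Finset.mem_range] at hm
    rw [stepA q n m (by omega)]
    have hg := gauss q hq0 hq m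
    have hsplit : q^(m^2)/(qp (q^2) (q^2) m * qp q q (n-m))
        = (q^(m^2) / qp q q (n-m)) * (1 / qp (q^2) (q^2) m) := by ring
    rw [hsplit, ← hg, Finset.mul_sum]
    apply Finset.sum_congr rfl
    intro i _
    rw [show 2*m^2 = m^2 + m^2 from by ring, pow_add]
    ring
  rw [Finset.sum_congr rfl step3, Finset.sum_comm]
  have step4 : ∀ u ∈ Finset.range (2*n+1),
      ∑ m ∈ Finset.range (n+1), FF q n u m
      = (-1:ℂ)^(u+n) * q^(2*((u-n)+(n-u))^2) / (qp q q (2*n-u) * qp q q u) := by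
    intro u hu
    rw [Finset.mem_range] at hu
    exact stepC q hq0 hq n u hu
  rw [Finset.sum_congr rfl step4]
  symm
  apply Finset.sum_nbij' (i := fun k : ℤ => (k + n).toNat) (j := fun u : ℕ => (u:ℤ) - n)
  · intro k hk
    rw [Finset.mem_Icc] at hk
    rw [Finset.mem_range]
    omega
  · intro u hu
    rw [Finset.mem_range] at hu
    rw [Finset.mem_Icc]
    omega
  · intro k hk
    rw [Finset.mem_Icc] at hk
    omega
  · intro u hu
    rw [Finset.mem_range] at hu
    omega
  · intro k hk
    rw [Finset.mem_Icc] at hk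
    have h1 : ((n:ℤ) - k).toNat = 2*n - (k+n).toNat := by omega
    have h2 : ((n:ℤ) + k).toNat = (k+n).toNat := by omega
    rw [h1, h2]
    have hsgn : (-1:ℂ)^k = (-1:ℂ)^((k+n).toNat + n) := by
      rw [← zsign ((k+n).toNat) n]
      congr 1
      omega
    rw [hsgn]
    have hpow : q^(2*k^2) = q^(2*(((k+n).toNat-n)+(n-(k+n).toNat))^2 : ℕ) := by
      rw [← zpow_natCast q (2*(((k+n).toNat-n)+(n-(k+n).toNat))^2)]
      congr 1
      rcases le_or_gt 0 k with hk0 | hk0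
      · have e : ((k+n).toNat-n)+(n-(k+n).toNat) = k.toNat := by omega
        rw [e]
        have : ((k.toNat : ℕ) : ℤ) = k := by omega
        push_cast
        rw [this]
      · have e : ((k+n).toNat-n)+(n-(k+n).toNat) = (-k).toNat := by omega
        rw [e]
        have : (((-k).toNat : ℕ) : ℤ) = -k := by omega
        push_cast
        rw [this]
        ring
    rw [hpow]
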